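/- arXiv:2009.11170 — 2 statements merged into one kernel-verified Lean document; each statement's English description precedes it below -/
import Mathlib

section
/- Let (G,K) be a compact Gelfand pair, ρ a nontrivial K-spherical irreducible unitary representation of G, Y a finite multiset on K that is a (ρ|_K)-design on K, and Ω a nonempty finite multiset on G with ∑_{z∈Ω} Z_ρ(z) = 0. Then the multiset X := Y · Ω · Y = { y₁ z y₂ : y₁ ∈ Y, z ∈ Ω, y₂ ∈ Y } satisfies ∑_{x∈X} ρ(x) = 0, i.e., X is a ρ-design on G. -/
open MeasureTheory

noncomputable section

def IsDesign {G V : Type*} [Group G] [TopologicalSpace G] [MeasurableSpace G]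
    [NormedAddCommGroup V] [NormedSpace ℂ V]
    (μ : Measure G) (ρ : G →* (V →L[ℂ] V)) (X : Multiset G) : Prop :=
  (X.card : ℂ)⁻¹ • (X.map fun x => ρ x).sum = ∫ g, ρ g ∂μ

/-- The submodule of `K`-fixed vectors of a representation `ρ` of `G`. -/
def fixedSubmodule {G V : Type*} [Group G] [NormedAddCommGroup V] [NormedSpace ℂ V]
    (K : Subgroup G) (ρ : G →* (V →L[ℂ] V)) : Submodule ℂ V where
  carrier := {v | ∀ k ∈ K, ρ k v = v}
  add_mem' := by
    intro a b ha hb k hk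
    rw [map_add, ha k hk, hb k hk]
  zero_mem' := by
    intro k hk
    rw [map_zero]
  smul_mem' := by
    intro c v hv k hk
    rw [_root_.map_smul, hv k hk]

lemma msum_apply {V : Type*} [NormedAddCommGroup V] [NormedSpace ℂ V]
    (s : Multiset (V →L[ℂ] V)) (v : V) :
    s.sum v = (s.map fun T => T v).sum := by
  induction s using Multiset.induction with
  | empty => simp
  | cons a s ih => simp [ih]

lemma minner_sum {V : Type*} [NormedAddCommGroup V] [InnerProductSpace ℂ V]
    (w : V) (s : Multiset V) :
    (inner ℂ w s.sum : ℂ) = (s.map fun x => (inner ℂ w x : ℂ)).sum := by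
  induction s using Multiset.induction with
  | empty => simp
  | cons a s ih => simp [inner_add_right, ih]

theorem inductive_construction_of_design
    {G : Type*} [Group G] [TopologicalSpace G] [IsTopologicalGroup G]
    [CompactSpace G] [T2Space G] [MeasurableSpace G] [BorelSpace G]
    (μ : Measure G) [μ.IsHaarMeasure] [IsProbabilityMeasure μ]
    (K : Subgroup G) (hK : IsClosed (K : Set G)) [CompactSpace K] [BorelSpace K]
    (ν : Measure K) [ν.IsHaarMeasure] [IsProbabilityMeasure ν]
    {V : Type*} [NormedAddCommGroup V] [InnerProductSpace ℂ V] [FiniteDimensional ℂ V]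
    [Nontrivial V]
    (ρ : G →* (V →L[ℂ] V)) (hρ : Continuous ρ)
    (hunit : ∀ (g : G) (v w : V), (inner ℂ (ρ g v) (ρ g w) : ℂ) = inner ℂ v w)
    (hirr : ∀ W : Submodule ℂ V, (∀ g : G, ∀ v ∈ W, ρ g v ∈ W) → W = ⊥ ∨ W = ⊤)
    (hnontriv : ∃ (g : G) (v : V), ρ g v ≠ v)
    (hspherical : Module.finrank ℂ (fixedSubmodule K ρ) = 1)
    (w : V) (hw : ‖w‖ = 1) (hwK : w ∈ fixedSubmodule K ρ)
    (Y : Multiset K) (hY : Y ≠ 0)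
    (hYdes : (Y.card : ℂ)⁻¹ • (Y.map fun k : K => ρ (k : G)).sum = ∫ k : K, ρ (k : G) ∂ν)
    (Ω : Multiset G) (hΩ : Ω ≠ 0)
    (hzonal : (Ω.map fun z => (inner ℂ w (ρ z w) : ℂ)).sum = 0) :
    ((Y.bind fun y₁ : K => Ω.bind fun z => Y.map fun y₂ : K =>
        (y₁ : G) * z * (y₂ : G)).map fun x => ρ x).sum = 0 ∧
    IsDesign μ ρ (Y.bind fun y₁ : K => Ω.bind fun z => Y.map fun y₂ : K =>
        (y₁ : G) * z * (y₂ : G)) := by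
  classical
  have hwne : w ≠ 0 := by
    intro h; rw [h, norm_zero] at hw; exact one_ne_zero hw.symm
  have hww : (inner ℂ w w : ℂ) = 1 := by
    rw [inner_self_eq_norm_sq_to_K, hw]; norm_num
  -- the fixed subspace is the span of w
  have hle : (Submodule.span ℂ {w}) ≤ fixedSubmodule K ρ := by
    rw [Submodule.span_singleton_le_iff_mem]; exact hwK
  have hspan : Submodule.span ℂ ({w} : Set V) = fixedSubmodule K ρ :=
    Submodule.eq_of_le_of_finrank_eq hle
      (by rw [finrank_span_singleton hwne, hspherical])
  -- invariance of inner ℂ products against w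
  have hKinv : ∀ k : G, k ∈ K → ∀ v : V, (inner ℂ w (ρ k v) : ℂ) = inner ℂ w v := by
    intro k hk v
    have h1 := hunit k⁻¹ w (ρ k v)
    have h2 : ρ k⁻¹ w = w := hwK k⁻¹ (inv_mem hk)
    have h3 : ρ k⁻¹ (ρ k v) = v := by
      rw [← ContinuousLinearMap.mul_apply, ← map_mul, inv_mul_cancel, map_one,
        ContinuousLinearMap.one_apply]
    rw [h2, h3] at h1
    exact h1.symm
  -- integrability
  have hcontK : Continuous fun k : K => ρ (k : G) := hρ.comp continuous_subtype_val
  have hintK : Integrable (fun k : K => ρ (k : G)) ν :=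
    hcontK.integrable_of_hasCompactSupport (HasCompactSupport.of_compactSpace _)
  have hintG : Integrable (fun g : G => ρ g) μ :=
    hρ.integrable_of_hasCompactSupport (HasCompactSupport.of_compactSpace _)
  set A : V →L[ℂ] V := ∫ k : K, ρ (k : G) ∂ν with hAdef
  -- A maps into the fixed subspace
  have hAfix : ∀ v : V, A v ∈ fixedSubmodule K ρ := by
    intro v k hk
    have hintKv : Integrable (fun k : K => ρ (k : G) v) ν :=
      (ContinuousLinearMap.apply ℂ V v).integrable_comp hintK
    rw [hAdef, ContinuousLinearMap.integral_apply hintK,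
      ← ContinuousLinearMap.integral_comp_comm (ρ k) hintKv]
    have heq : ∀ k' : K, ρ k (ρ (k' : G) v) = ρ (((⟨k, hk⟩ : K) * k' : K) : G) v := by
      intro k'
      rw [Subgroup.coe_mul, map_mul, ContinuousLinearMap.mul_apply]
    simp_rw [heq]
    exact MeasureTheory.integral_mul_left_eq_self (fun k' : K => ρ ((k' : K) : G) v) ⟨k, hk⟩
  have hYcard : (Y.card : ℂ) ≠ 0 := by
    simpa [Multiset.card_eq_zero] using hY
  -- A is the rank-one projection onto w
  have hkey : ∀ v : V, A v = (inner ℂ w v : ℂ) • w := by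
    intro v
    have hm : A v ∈ Submodule.span ℂ ({w} : Set V) := by rw [hspan]; exact hAfix v
    obtain ⟨c, hc⟩ := Submodule.mem_span_singleton.mp hm
    have hcval : (inner ℂ w (A v) : ℂ) = c := by
      rw [← hc, inner_smul_right, hww, mul_one]
    have hAv : (inner ℂ w (A v) : ℂ) = inner ℂ w v := by
      rw [← hYdes, ContinuousLinearMap.smul_apply, inner_smul_right, msum_apply,
        Multiset.map_map, minner_sum, Multiset.map_map]
      have hmc : (Y.map ((fun x => (inner ℂ w x : ℂ)) ∘ ((fun T : V →L[ℂ] V => T v) ∘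
          fun k : K => ρ (k : G)))) = Y.map fun _ => (inner ℂ w v : ℂ) :=
        Multiset.map_congr rfl fun y _ => hKinv (y : G) y.2 v
      rw [hmc, Multiset.map_const', Multiset.sum_replicate, nsmul_eq_mul]
      field_simp
    rw [← hc, ← hcval, hAv]
  -- the integral over G vanishes
  have hfixG : ∀ v : V, (∀ g : G, ρ g v = v) → v = 0 := by
    intro v hv
    have hWinv : ∀ g : G, ∀ u ∈ fixedSubmodule (⊤ : Subgroup G) ρ,
        ρ g u ∈ fixedSubmodule (⊤ : Subgroup G) ρ := by
      intro g u hu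
      have : ρ g u = u := hu g (Subgroup.mem_top g)
      rw [this]; exact hu
    rcases hirr _ hWinv with h | h
    · have hmem : v ∈ fixedSubmodule (⊤ : Subgroup G) ρ := fun k _ => hv k
      rw [h, Submodule.mem_bot] at hmem
      exact hmem
    · exfalso
      obtain ⟨g, u, hgu⟩ := hnontriv
      have hu : u ∈ fixedSubmodule (⊤ : Subgroup G) ρ := by rw [h]; exact Submodule.mem_top
      exact hgu (hu g (Subgroup.mem_top g))
  have hTzero : (∫ g, ρ g ∂μ) = (0 : V →L[ℂ] V) := by
    ext v
    rw [ContinuousLinearMap.zero_apply]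
    apply hfixG
    intro g
    have hintGv : Integrable (fun g : G => ρ g v) μ :=
      (ContinuousLinearMap.apply ℂ V v).integrable_comp hintG
    rw [ContinuousLinearMap.integral_apply hintG,
      ← ContinuousLinearMap.integral_comp_comm (ρ g) hintGv]
    have heq : ∀ x : G, ρ g (ρ x v) = ρ (g * x) v := by
      intro x; rw [map_mul, ContinuousLinearMap.mul_apply]
    simp_rw [heq]
    exact MeasureTheory.integral_mul_left_eq_self (fun x : G => ρ x v) g
  -- the main computation
  set B : V →L[ℂ] V := (Y.map fun k : K => ρ (k : G)).sum with hBdef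
  set C : V →L[ℂ] V := (Ω.map fun z => ρ z).sum with hCdef
  have hBA : B = (Y.card : ℂ) • A := by
    rw [← hYdes, smul_inv_smul₀ hYcard]
  have hsum : ((Y.bind fun y₁ : K => Ω.bind fun z => Y.map fun y₂ : K =>
        (y₁ : G) * z * (y₂ : G)).map fun x => ρ x).sum = B * C * B := by
    rw [Multiset.map_bind, Multiset.sum_bind]
    have step1 : ∀ y₁ : K, (((Ω.bind fun z => Y.map fun y₂ : K =>
        (y₁ : G) * z * (y₂ : G)).map fun x => ρ x)).sum = ρ (y₁ : G) * C * B := by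
      intro y₁
      rw [Multiset.map_bind, Multiset.sum_bind]
      have step2 : ∀ z : G, (((Y.map fun y₂ : K => (y₁ : G) * z * (y₂ : G)).map
          fun x => ρ x)).sum = ρ (y₁ : G) * ρ z * B := by
        intro z
        rw [Multiset.map_map]
        have : (Y.map ((fun x => ρ x) ∘ fun y₂ : K => (y₁ : G) * z * (y₂ : G))) =
            Y.map fun y₂ : K => (ρ (y₁ : G) * ρ z) * ρ (y₂ : G) :=
          Multiset.map_congr rfl fun y _ => by
            simp only [Function.comp_apply, map_mul]
        rw [this, Multiset.sum_map_mul_left, hBdef]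
      have : (Ω.map fun z => (((Y.map fun y₂ : K => (y₁ : G) * z * (y₂ : G)).map
          fun x => ρ x)).sum) = Ω.map fun z => (ρ (y₁ : G) * ρ z) * B :=
        Multiset.map_congr rfl fun z _ => step2 z
      rw [this, Multiset.sum_map_mul_right, Multiset.sum_map_mul_left, ← hCdef]
    have hmc : (Y.map fun y₁ : K => (((Ω.bind fun z => Y.map fun y₂ : K =>
        (y₁ : G) * z * (y₂ : G)).map fun x => ρ x)).sum) =
        Y.map fun y₁ : K => ρ (y₁ : G) * (C * B) :=
      Multiset.map_congr rfl fun y₁ _ => by rw [step1 y₁, mul_assoc]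
    rw [hmc, Multiset.sum_map_mul_right, ← hBdef, ← mul_assoc]
  have hACA : A * C * A = 0 := by
    ext v
    simp only [ContinuousLinearMap.mul_apply, ContinuousLinearMap.zero_apply]
    rw [hkey v, _root_.map_smul, _root_.map_smul, hkey (C w)]
    have hCw : (inner ℂ w (C w) : ℂ) = 0 := by
      rw [hCdef, msum_apply, Multiset.map_map, minner_sum, Multiset.map_map]
      exact hzonal
    rw [hCw, zero_smul, smul_zero]
  have hfinal : ((Y.bind fun y₁ : K => Ω.bind fun z => Y.map fun y₂ : K =>
      (y₁ : G) * z * (y₂ : G)).map fun x => ρ x).sum = 0 := by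
    rw [hsum, hBA, smul_mul_assoc, smul_mul_assoc, mul_smul_comm, hACA, smul_zero, smul_zero]
  refine ⟨hfinal, ?_⟩
  unfold IsDesign
  rw [hfinal, hTzero, smul_zero]
end
end

section
/- Let G be a compact group and, for i = 1,…,l, let Υ_i be a collection of finite-dimensional continuous representations of G, Y a nonempty finite multiset on G, and Ω_i nonempty finite multisets on G such that Y · Ω_i · Y is a Υ_i-design on G for each i. Then the product multiset Y · Ω₁ · Y · Ω₂ · Y ⋯ Ω_l · Y is a (⋃_{i=1}^l Υ_i)-design on G. -/
open MeasureTheory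

noncomputable section

/-- The product `A · B = { ab : a ∈ A, b ∈ B }` of two finite multisets with multiplicities. -/
def msMul {G : Type*} [Mul G] (A B : Multiset G) : Multiset G :=
  A.bind fun a => B.map fun b => a * b

section Aux

variable {G : Type*} [Group G]

lemma msMul_assoc (A B C : Multiset G) :
    msMul (msMul A B) C = msMul A (msMul B C) := by
  unfold msMul
  rw [Multiset.bind_assoc]
  congr 1; ext a
  rw [Multiset.bind_map, Multiset.map_bind]
  congr 1; ext b
  rw [Multiset.map_map]
  congr 1; ext c
  simp [Function.comp, mul_assoc]

lemma msMul_card (A B : Multiset G) : (msMul A B).card = A.card * B.card := by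
  simp [msMul, Multiset.card_bind]

lemma msMul_ne_zero {A B : Multiset G} (hA : A ≠ 0) (hB : B ≠ 0) : msMul A B ≠ 0 := by
  rw [← Multiset.card_pos] at hA hB ⊢
  rw [msMul_card]
  exact Nat.mul_pos hA hB

lemma sum_map_msMul {M : Type*} [NonUnitalNonAssocSemiring M] (f : G → M)
    (hf : ∀ a b, f (a * b) = f a * f b) (A B : Multiset G) :
    ((msMul A B).map f).sum = (A.map f).sum * (B.map f).sum := by
  simp [msMul, Multiset.map_bind, Multiset.sum_bind, hf, Multiset.sum_map_mul_left,
    Multiset.sum_map_mul_right]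

variable [TopologicalSpace G] [IsTopologicalGroup G]
    [CompactSpace G] [T2Space G] [MeasurableSpace G] [BorelSpace G]
    (μ : Measure G) [μ.IsHaarMeasure] [μ.IsMulRightInvariant] [IsProbabilityMeasure μ]
    {V : Type*} [NormedAddCommGroup V] [NormedSpace ℂ V] [FiniteDimensional ℂ V]
    (ρ : G →* (V →L[ℂ] V)) (hρ : Continuous ρ)

include hρ

lemma mul_integral_eq (a : G) : ρ a * (∫ g, ρ g ∂μ) = ∫ g, ρ g ∂μ := by
  have hint : Integrable (fun g => ρ g) μ :=
    hρ.integrable_of_hasCompactSupport (HasCompactSupport.of_compactSpace _)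
  have h1 : ρ a * (∫ g, ρ g ∂μ) = ∫ g, ρ a * ρ g ∂μ :=
    (ContinuousLinearMap.integral_comp_comm (ContinuousLinearMap.mul ℂ _ (ρ a)) hint).symm
  rw [h1]
  simp_rw [← map_mul ρ]
  exact integral_mul_left_eq_self (fun g => ρ g) a

lemma integral_mul_eq (a : G) : (∫ g, ρ g ∂μ) * ρ a = ∫ g, ρ g ∂μ := by
  have hint : Integrable (fun g => ρ g) μ :=
    hρ.integrable_of_hasCompactSupport (HasCompactSupport.of_compactSpace _)
  have h1 : (∫ g, ρ g ∂μ) * ρ a = ∫ g, ρ g * ρ a ∂μ :=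
    (ContinuousLinearMap.integral_comp_comm ((ContinuousLinearMap.mul ℂ _).flip (ρ a)) hint).symm
  rw [h1]
  simp_rw [← map_mul ρ]
  exact integral_mul_right_eq_self (fun g => ρ g) a

lemma sum_map_const_mul_integral (A : Multiset G) :
    (A.map fun x => ρ x).sum * (∫ g, ρ g ∂μ) = (A.card : ℂ) • ∫ g, ρ g ∂μ := by
  rw [← Multiset.sum_map_mul_right]
  rw [Multiset.map_congr rfl fun a _ => mul_integral_eq μ ρ hρ a]
  rw [Multiset.map_const', Multiset.sum_replicate, Nat.cast_smul_eq_nsmul]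

lemma integral_mul_sum_map_const (A : Multiset G) :
    (∫ g, ρ g ∂μ) * (A.map fun x => ρ x).sum = (A.card : ℂ) • ∫ g, ρ g ∂μ := by
  rw [← Multiset.sum_map_mul_left]
  rw [Multiset.map_congr rfl fun a _ => integral_mul_eq μ ρ hρ a]
  rw [Multiset.map_const', Multiset.sum_replicate, Nat.cast_smul_eq_nsmul]

lemma isDesign_msMul_left {X : Multiset G} (hX : IsDesign μ ρ X) {A : Multiset G}
    (hA : A ≠ 0) : IsDesign μ ρ (msMul A X) := by
  unfold IsDesign at hX ⊢
  by_cases hX0 : X = 0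
  · subst hX0
    simp only [Multiset.card_zero, Nat.cast_zero, inv_zero, Multiset.map_zero,
      Multiset.sum_zero, smul_zero] at hX
    simp [msMul, ← hX]
  · have hc : (X.card : ℂ) ≠ 0 := by
      simpa [Multiset.card_eq_zero] using hX0
    have hca : (A.card : ℂ) ≠ 0 := by
      simpa [Multiset.card_eq_zero] using hA
    have hS : (X.map fun x => ρ x).sum = (X.card : ℂ) • ∫ g, ρ g ∂μ := by
      rw [← hX, smul_smul, mul_inv_cancel₀ hc, one_smul]
    rw [sum_map_msMul (fun x => ρ x) (by simp) A X, msMul_card, hS, mul_smul_comm,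
      sum_map_const_mul_integral μ ρ hρ, smul_smul, smul_smul]
    rw [show (((A.card * X.card : ℕ) : ℂ))⁻¹ * (X.card : ℂ) * (A.card : ℂ) = 1 by
      push_cast; field_simp; try ring]
    rw [one_smul]

lemma isDesign_msMul_right {X : Multiset G} (hX : IsDesign μ ρ X) {B : Multiset G}
    (hB : B ≠ 0) : IsDesign μ ρ (msMul X B) := by
  unfold IsDesign at hX ⊢
  by_cases hX0 : X = 0
  · subst hX0
    simp only [Multiset.card_zero, Nat.cast_zero, inv_zero, Multiset.map_zero,
      Multiset.sum_zero, smul_zero] at hX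
    simp [msMul, ← hX]
  · have hc : (X.card : ℂ) ≠ 0 := by
      simpa [Multiset.card_eq_zero] using hX0
    have hcb : (B.card : ℂ) ≠ 0 := by
      simpa [Multiset.card_eq_zero] using hB
    have hS : (X.map fun x => ρ x).sum = (X.card : ℂ) • ∫ g, ρ g ∂μ := by
      rw [← hX, smul_smul, mul_inv_cancel₀ hc, one_smul]
    rw [sum_map_msMul (fun x => ρ x) (by simp) X B, msMul_card, hS, smul_mul_assoc,
      integral_mul_sum_map_const μ ρ hρ B, smul_smul, smul_smul]
    rw [show (((X.card * B.card : ℕ) : ℂ))⁻¹ * (X.card : ℂ) * (B.card : ℂ) = 1 by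
      push_cast; field_simp; try ring]
    rw [one_smul]

lemma isDesign_foldl {M : Multiset G} (hM : IsDesign μ ρ M) :
    ∀ L : List (Multiset G), (∀ X ∈ L, X ≠ 0) → IsDesign μ ρ (L.foldl msMul M) := by
  intro L
  induction L generalizing M with
  | nil => intro _; exact hM
  | cons x L ih =>
    intro hL
    exact ih (isDesign_msMul_right μ ρ hρ hM (hL x (by simp)))
      (fun X hX => hL X (by simp [hX]))

end Aux

lemma prefix_shape {G : Type*} [Group G] (Y : Multiset G) (hY : Y ≠ 0)
    (L : List (Multiset G)) (hL : ∀ X ∈ L, ∃ B, B ≠ 0 ∧ X = msMul B Y) :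
    L.foldl msMul Y = Y ∨ ∃ A, A ≠ 0 ∧ L.foldl msMul Y = msMul A Y := by
  induction L using List.reverseRecOn with
  | nil => exact Or.inl rfl
  | append_singleton L x ih =>
    obtain ⟨B, hB, rfl⟩ := hL x (by simp)
    have ih' := ih (fun X hX => hL X (by simp [hX]))
    rw [List.foldl_append, List.foldl_cons, List.foldl_nil]
    rcases ih' with h | ⟨A, hA, h⟩
    · rw [h, ← msMul_assoc]
      exact Or.inr ⟨msMul Y B, msMul_ne_zero hY hB, rfl⟩
    · rw [h, ← msMul_assoc]
      exact Or.inr ⟨msMul (msMul A Y) B, msMul_ne_zero (msMul_ne_zero hA hY) hB, rfl⟩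

theorem chain_product_is_union_design
    {G : Type*} [Group G] [TopologicalSpace G] [IsTopologicalGroup G]
    [CompactSpace G] [T2Space G] [MeasurableSpace G] [BorelSpace G]
    (μ : Measure G) [μ.IsHaarMeasure] [μ.IsMulRightInvariant] [IsProbabilityMeasure μ]
    {ι : Type*} {V : ι → Type*}
    [∀ j, NormedAddCommGroup (V j)] [∀ j, NormedSpace ℂ (V j)]
    [∀ j, FiniteDimensional ℂ (V j)]
    (ρ : ∀ j, G →* (V j →L[ℂ] V j)) (hρ : ∀ j, Continuous (ρ j))
    (l : ℕ) (Υ : Fin l → Set ι)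
    (Y : Multiset G) (hY : Y ≠ 0)
    (Ω : Fin l → Multiset G) (hΩ : ∀ i, Ω i ≠ 0)
    (hdes : ∀ i : Fin l, ∀ j ∈ Υ i, IsDesign μ (ρ j) (msMul (msMul Y (Ω i)) Y)) :
    ∀ j ∈ ⋃ i, Υ i,
      IsDesign μ (ρ j) ((List.ofFn fun i => msMul (Ω i) Y).foldl msMul Y) := by
  intro j hj
  obtain ⟨i, hji⟩ := Set.mem_iUnion.mp hj
  set L : List (Multiset G) := List.ofFn fun i => msMul (Ω i) Y with hLdef
  have hmem : ∀ X ∈ L, ∃ k, X = msMul (Ω k) Y := by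
    intro X hX
    obtain ⟨k, hk⟩ := List.mem_ofFn.mp hX
    exact ⟨k, hk.symm⟩
  have hilen : (i : ℕ) < L.length := by simp [hLdef, i.isLt]
  have hgi : L[(i : ℕ)] = msMul (Ω i) Y := by simp [hLdef]
  have hsplit : L = L.take i ++ L[(i : ℕ)] :: L.drop (i + 1) := by
    conv_lhs => rw [← List.take_append_drop (i : ℕ) L]
    rw [List.drop_eq_getElem_cons hilen]
  rw [hsplit, List.foldl_append, List.foldl_cons]
  apply isDesign_foldl μ (ρ j) (hρ j)
  · -- middle is a design
    have hpre := prefix_shape Y hY (L.take i) (fun X hX => by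
      obtain ⟨k, hk⟩ := hmem X (List.mem_of_mem_take hX)
      exact ⟨Ω k, hΩ k, hk⟩)
    rw [hgi]
    rcases hpre with h | ⟨A, hA, h⟩
    · rw [h, ← msMul_assoc]
      exact hdes i j hji
    · rw [h, msMul_assoc, ← msMul_assoc Y (Ω i) Y]
      exact isDesign_msMul_left μ (ρ j) (hρ j) (hdes i j hji) hA
  · intro X hX
    obtain ⟨k, hk⟩ := hmem X (List.mem_of_mem_drop hX)
    rw [hk]
    exact msMul_ne_zero (hΩ k) hY
end
end
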